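/- Let (A,[·,·],ε,α) be a multiplicative color Hom-Lie algebra and s an integer. Define ad_s(a)(x) = [α^s(a), x]. Then ad_s(α(x))∘α = α∘ad_s(x) and ad_s([x,y])∘α = ad_s(α(x))∘ad_s(y) - ε(x,y)ad_s(α(y))∘ad_s(x), so (A, ad_s, α) is a representation of A. -/

import Mathlib

/-- For a multiplicative color Hom-Lie algebra `(A,[·,·],ε,α)` with `α`
invertible and any integer `s`, `ad_s(a)(x) = [α^s(a), x]` defines a
representation `(A, ad_s, α)`. -/
theorem stmt11 {K : Type*} [Field K] {Γ : Type*} [AddCommGroup Γ] [DecidableEq Γ]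
    {A : Type*} [AddCommGroup A] [Module K A]
    (G : Γ → Submodule K A) (hG : DirectSum.IsInternal G)
    (ε : Γ → Γ → K)
    (hε0 : ∀ a b, ε a b ≠ 0)
    (hε1 : ∀ a b, ε a b * ε b a = 1)
    (hε2 : ∀ a b c, ε a (b + c) = ε a b * ε a c)
    (hε3 : ∀ a b c, ε (a + b) c = ε a c * ε b c)
    (br : A →ₗ[K] A →ₗ[K] A)
    (hbrG : ∀ a b (x y : A), x ∈ G a → y ∈ G b → br x y ∈ G (a + b))
    (α : A ≃ₗ[K] A)
    (hαG : ∀ a (x : A), x ∈ G a → α x ∈ G a)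
    (hskew : ∀ a b (x y : A), x ∈ G a → y ∈ G b → br x y = -(ε a b) • br y x)
    (hjac : ∀ a b c (x y z : A), x ∈ G a → y ∈ G b → z ∈ G c →
      ε c a • br (α x) (br y z) + ε a b • br (α y) (br z x)
        + ε b c • br (α z) (br x y) = 0)
    (hmul : ∀ x y : A, α (br x y) = br (α x) (α y))
    (s : ℤ) :
    -- ad_s(α(x)) ∘ α = α ∘ ad_s(x)
    (∀ x z : A, br ((α ^ s) (α x)) (α z) = α (br ((α ^ s) x) z)) ∧
    -- ad_s([x,y]) ∘ α = ad_s(α(x)) ∘ ad_s(y) - ε(x,y) ad_s(α(y)) ∘ ad_s(x)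
    (∀ a b (x y : A), x ∈ G a → y ∈ G b → ∀ z : A,
      br ((α ^ s) (br x y)) (α z)
        = br ((α ^ s) (α x)) (br ((α ^ s) y) z)
          - ε a b • br ((α ^ s) (α y)) (br ((α ^ s) x) z)) := by

  classical
  -- α commutes with α ^ s
  have hcomm : ∀ x : A, (α ^ s) (α x) = α ((α ^ s) x) := by
    intro x
    have h : α ^ s * α = α * α ^ s := by
      rw [← zpow_add_one, ← zpow_one_add, add_comm]
    calc (α ^ s) (α x) = (α ^ s * α) x := rfl
      _ = (α * α ^ s) x := by rw [h]
      _ = α ((α ^ s) x) := rfl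
  -- α.symm preserves grading
  have hinv : ∀ a (x : A), x ∈ G a → α.symm x ∈ G a := by
    intro a x hx
    set T : Submodule K A := ⨆ (b : Γ) (_ : b ≠ a), G b with hT
    have htop : (⨆ b, G b : Submodule K A) ≤ G a ⊔ T := by
      refine iSup_le fun b => ?_
      by_cases hb : b = a
      · subst hb; exact le_sup_left
      · exact le_sup_of_le_right (le_iSup_of_le b (le_iSup_of_le hb le_rfl))
    have hy : α.symm x ∈ G a ⊔ T := htop (by rw [hG.submodule_iSup_eq_top]; trivial)
    obtain ⟨p, hp, q, hq, hpq⟩ := Submodule.mem_sup.mp hy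
    have hmapT : Submodule.map (α : A →ₗ[K] A) T ≤ T := by
      rw [hT, Submodule.map_iSup]
      refine iSup_mono fun b => ?_
      rw [Submodule.map_iSup]
      refine iSup_mono fun hb => ?_
      rintro _ ⟨z, hz, rfl⟩
      exact hαG b z hz
    have hq' : α q ∈ T := hmapT ⟨q, hq, rfl⟩
    have hxeq : x = α p + α q := by
      rw [← map_add, hpq, LinearEquiv.apply_symm_apply]
    have hq'' : α q ∈ G a := by
      have : α q = x - α p := by rw [hxeq]; abel
      rw [this]; exact sub_mem hx (hαG a p hp)
    have hdis : Disjoint (G a) T := hG.submodule_iSupIndep a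
    have hq0 : α q = 0 := by
      have := hdis.le_bot ⟨hq'', hq'⟩
      simpa using this
    have : q = 0 := by
      have := congrArg α.symm hq0
      simpa using this
    rw [this, add_zero] at hpq
    rw [← hpq]; exact hp
  -- α ^ s preserves grading
  have hpow : ∀ (t : ℤ) a (x : A), x ∈ G a → (α ^ t) x ∈ G a := by
    intro t
    induction t using Int.induction_on with
    | zero => intro a x hx; simpa using hx
    | succ n ih =>
        intro a x hx
        have : α ^ ((n : ℤ) + 1) = α ^ (n : ℤ) * α := zpow_add_one α n
        rw [this]
        exact ih a (α x) (hαG a x hx)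
    | pred n ih =>
        intro a x hx
        have : α ^ (-(n : ℤ) - 1) = α ^ (-(n : ℤ)) * α⁻¹ := zpow_sub_one α _
        rw [this]
        have : α⁻¹ x ∈ G a := by
          have : α⁻¹ x = α.symm x := rfl
          rw [this]; exact hinv a x hx
        exact ih a _ this
  -- α.symm is multiplicative
  have hmulinv : ∀ x y : A, α.symm (br x y) = br (α.symm x) (α.symm y) := by
    intro x y
    apply α.injective
    rw [LinearEquiv.apply_symm_apply, hmul, LinearEquiv.apply_symm_apply,
      LinearEquiv.apply_symm_apply]
  -- α ^ s is multiplicative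
  have hpowmul : ∀ (t : ℤ) (x y : A), (α ^ t) (br x y) = br ((α ^ t) x) ((α ^ t) y) := by
    intro t
    induction t using Int.induction_on with
    | zero => intro x y; simp
    | succ n ih =>
        intro x y
        have h : α ^ ((n : ℤ) + 1) = α ^ (n : ℤ) * α := zpow_add_one α n
        rw [h]
        show (α ^ (n : ℤ)) (α (br x y)) = br ((α ^ (n : ℤ)) (α x)) ((α ^ (n : ℤ)) (α y))
        rw [hmul, ih]
    | pred n ih =>
        intro x y
        have h : α ^ (-(n : ℤ) - 1) = α ^ (-(n : ℤ)) * α⁻¹ := zpow_sub_one α _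
        rw [h]
        show (α ^ (-(n : ℤ))) (α.symm (br x y))
            = br ((α ^ (-(n : ℤ))) (α.symm x)) ((α ^ (-(n : ℤ))) (α.symm y))
        rw [hmulinv, ih]
  constructor
  · intro x z
    rw [hcomm, hmul]
  · intro a b x y hx hy z
    have hztop : z ∈ (⨆ c, G c : Submodule K A) := by
      rw [hG.submodule_iSup_eq_top]; trivial
    refine Submodule.iSup_induction G (motive := fun z =>
        br ((α ^ s) (br x y)) (α z)
          = br ((α ^ s) (α x)) (br ((α ^ s) y) z)
            - ε a b • br ((α ^ s) (α y)) (br ((α ^ s) x) z)) hztop ?_ ?_ ?_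
    · intro c z hzc
      set X := (α ^ s) x with hXdef
      set Y := (α ^ s) y with hYdef
      have hX : X ∈ G a := hpow s a x hx
      have hY : Y ∈ G b := hpow s b y hy
      rw [hpowmul s x y, hcomm x, hcomm y, ← hXdef, ← hYdef]
      have hj := hjac a b c X Y z hX hY hzc
      have hskew1 : br z X = -(ε c a) • br X z := hskew c a z X hzc hX
      have hcoef : ε b c * (ε c a * ε c b) = ε c a := by
        linear_combination ε c a * hε1 b c
      have e1 : ε a b • br (α Y) (br z X)
          = -((ε c a * ε a b) • br (α Y) (br X z)) := by
        rw [hskew1, map_smul, smul_smul, mul_neg, neg_smul, mul_comm]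
      have e2 : ε b c • br (α z) (br X Y)
          = -(ε c a • br (br X Y) (α z)) := by
        rw [hskew c (a + b) (α z) (br X Y) (hαG c z hzc) (hbrG a b X Y hX hY)]
        rw [smul_smul, mul_neg, neg_smul, hε2, hcoef]
      rw [e1, e2] at hj
      have hw := (add_neg_eq_zero.mp hj).symm
      apply smul_right_injective A (hε0 c a)
      dsimp only
      rw [smul_sub, smul_smul, hw, ← sub_eq_add_neg]
    · simp
    · intro z₁ z₂ h1 h2
      simp only [map_add, smul_add]
      rw [h1, h2]; abel
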